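/- Let K_max = ‖C₀‖·‖A‖·‖(Γ + AC₀A*)⁻¹‖, β = K_max·‖M‖, L = ‖m₀‖ + K_max·‖b − Am₀‖, and suppose 0 ≤ δ < 1/β. Define the covariance iterates C₀(δ) = C₀, C_{ℓ+1}(δ) = F(C_ℓ(δ),δ) and the mean iterates m₀(δ) = m₀, m_{ℓ+1}(δ) = m₀ + K(C_ℓ(δ),δ)(b − Am₀ − δ M m_ℓ(δ)). Then for every ℓ ≥ 0, ‖m_ℓ(δ)‖ ≤ (βδ)^ℓ ‖m₀‖ + L/(1 − βδ); in particular the sequence of means is uniformly bounded. -/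

import Mathlib

open ContinuousLinearMap
open scoped RealInnerProductSpace

/-- The operator `K(B,δ) = C₀ A* (Γ + δ² M B M* + A C₀ A*)⁻¹ : Y → X`. -/
noncomputable def Kop {X Y : Type*}
    [NormedAddCommGroup X] [InnerProductSpace ℝ X] [CompleteSpace X]
    [NormedAddCommGroup Y] [InnerProductSpace ℝ Y] [FiniteDimensional ℝ Y]
    (A M : X →L[ℝ] Y) (C₀ : X →L[ℝ] X) (Γ : Y →L[ℝ] Y)
    (B : X →L[ℝ] X) (δ : ℝ) : Y →L[ℝ] X :=
  C₀ ∘L (adjoint A) ∘L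
    Ring.inverse (Γ + δ ^ 2 • (M ∘L B ∘L adjoint M) + A ∘L C₀ ∘L adjoint A)

/-- The map `F(B,δ) = C₀ − K(B,δ) A C₀`. -/
noncomputable def Fop {X Y : Type*}
    [NormedAddCommGroup X] [InnerProductSpace ℝ X] [CompleteSpace X]
    [NormedAddCommGroup Y] [InnerProductSpace ℝ Y] [FiniteDimensional ℝ Y]
    (A M : X →L[ℝ] Y) (C₀ : X →L[ℝ] X) (Γ : Y →L[ℝ] Y)
    (B : X →L[ℝ] X) (δ : ℝ) : X →L[ℝ] X :=
  C₀ - (Kop A M C₀ Γ B δ) ∘L A ∘L C₀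

/-- The covariance iterates `C₀(δ) = C₀`, `C_{ℓ+1}(δ) = F(C_ℓ(δ),δ)`. -/
noncomputable def covIter {X Y : Type*}
    [NormedAddCommGroup X] [InnerProductSpace ℝ X] [CompleteSpace X]
    [NormedAddCommGroup Y] [InnerProductSpace ℝ Y] [FiniteDimensional ℝ Y]
    (A M : X →L[ℝ] Y) (C₀ : X →L[ℝ] X) (Γ : Y →L[ℝ] Y) (δ : ℝ) : ℕ → (X →L[ℝ] X)
  | 0 => C₀
  | (n + 1) => Fop A M C₀ Γ (covIter A M C₀ Γ δ n) δ

/-- The mean iterates `m₀(δ) = m₀`, `m_{ℓ+1}(δ) = m₀ + K(C_ℓ(δ),δ)(b − A m₀ − δ M m_ℓ(δ))`. -/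
noncomputable def meanIter {X Y : Type*}
    [NormedAddCommGroup X] [InnerProductSpace ℝ X] [CompleteSpace X]
    [NormedAddCommGroup Y] [InnerProductSpace ℝ Y] [FiniteDimensional ℝ Y]
    (A M : X →L[ℝ] Y) (C₀ : X →L[ℝ] X) (Γ : Y →L[ℝ] Y)
    (m₀ : X) (b : Y) (δ : ℝ) : ℕ → X
  | 0 => m₀
  | (n + 1) => m₀ + (Kop A M C₀ Γ (covIter A M C₀ Γ δ n) δ)
      (b - A m₀ - δ • M (meanIter A M C₀ Γ m₀ b δ n))


section CS

variable {E : Type*} [NormedAddCommGroup E] [InnerProductSpace ℝ E] [CompleteSpace E]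

lemma pos_nonneg {T : E →L[ℝ] E} (hT : T.IsPositive) (x : E) : 0 ≤ ⟪T x, x⟫ := by
  simpa using hT.inner_nonneg_left x

lemma sym_inner {T : E →L[ℝ] E} (hT : T.IsPositive) (x y : E) : ⟪T x, y⟫ = ⟪x, T y⟫ :=
  hT.isSelfAdjoint.isSymmetric x y

lemma pos_cs {T : E →L[ℝ] E} (hT : T.IsPositive) (x y : E) :
    ⟪T x, y⟫ ^ 2 ≤ ⟪T x, x⟫ * ⟪T y, y⟫ := by
  have key : ∀ t : ℝ, 0 ≤ ⟪T y, y⟫ * (t * t) + (2 * ⟪T x, y⟫) * t + ⟪T x, x⟫ := by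
    intro t
    have h0 := pos_nonneg hT (x + t • y)
    have hsym : ⟪T y, x⟫ = ⟪T x, y⟫ := by
      rw [sym_inner hT y x, real_inner_comm]
    rw [map_add, map_smul] at h0
    rw [inner_add_left, inner_add_right, inner_add_right, real_inner_smul_left,
      real_inner_smul_left, real_inner_smul_right, real_inner_smul_right, hsym] at h0
    nlinarith [h0]
  have := discrim_le_zero key
  rw [discrim] at this
  nlinarith [this]

lemma smul_pos_of_nonneg {T : E →L[ℝ] E} (hT : T.IsPositive) {c : ℝ} (hc : 0 ≤ c) :
    (c • T).IsPositive := by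
  rw [isPositive_def']
  constructor
  · rw [IsSelfAdjoint, star_smul, hT.isSelfAdjoint.star_eq]
    simp
  · intro x
    have := pos_nonneg hT x
    simp only [reApplyInnerSelf, coe_smul', Pi.smul_apply, real_inner_smul_left]
    simpa using mul_nonneg hc this

end CS

section FinDim

variable {Y : Type*} [NormedAddCommGroup Y] [InnerProductSpace ℝ Y] [FiniteDimensional ℝ Y]

lemma isUnit_of_strict (Q : Y →L[ℝ] Y) (h : ∀ y : Y, y ≠ 0 → 0 < ⟪Q y, y⟫) : IsUnit Q := by
  haveI : CompleteSpace Y := FiniteDimensional.complete ℝ Y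
  rw [ContinuousLinearMap.isUnit_iff_bijective]
  have hinj : Function.Injective Q := by
    intro a b hab
    by_contra hne
    have hy : a - b ≠ 0 := sub_ne_zero.mpr hne
    have : Q (a - b) = 0 := by rw [map_sub, hab, sub_self]
    have := h (a - b) hy
    rw [‹Q (a - b) = 0›, inner_zero_left] at this
    exact lt_irrefl 0 this
  exact ⟨hinj, (LinearMap.injective_iff_surjective (f := (Q : Y →ₗ[ℝ] Y))).mp hinj⟩

lemma inverse_comp_cancel {Q : Y →L[ℝ] Y} (hU : IsUnit Q) (y : Y) :
    Q (Ring.inverse Q y) = y ∧ Ring.inverse Q (Q y) = y := by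
  haveI : CompleteSpace Y := FiniteDimensional.complete ℝ Y
  constructor
  · have := Ring.mul_inverse_cancel Q hU
    calc Q (Ring.inverse Q y) = (Q * Ring.inverse Q) y := rfl
    _ = y := by rw [this]; rfl
  · have := Ring.inverse_mul_cancel Q hU
    calc Ring.inverse Q (Q y) = (Ring.inverse Q * Q) y := rfl
    _ = y := by rw [this]; rfl

lemma inverse_selfAdjoint {Q : Y →L[ℝ] Y} (hQ : IsSelfAdjoint Q) :
    IsSelfAdjoint (Ring.inverse Q) := by
  rw [IsSelfAdjoint, ← Ring.inverse_star, hQ.star_eq]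

lemma inverse_isPositive {Q : Y →L[ℝ] Y} (hQ : Q.IsPositive) (hU : IsUnit Q) :
    (Ring.inverse Q).IsPositive := by
  haveI : CompleteSpace Y := FiniteDimensional.complete ℝ Y
  refine isPositive_def'.mpr ⟨inverse_selfAdjoint hQ.isSelfAdjoint, fun y => ?_⟩
  have h1 : Q (Ring.inverse Q y) = y := (inverse_comp_cancel hU y).1
  have h2 : ⟪Ring.inverse Q y, y⟫ = ⟪Q (Ring.inverse Q y), Ring.inverse Q y⟫ := by
    calc ⟪Ring.inverse Q y, y⟫ = ⟪Ring.inverse Q y, Q (Ring.inverse Q y)⟫ := by rw [h1]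
    _ = ⟪Q (Ring.inverse Q y), Ring.inverse Q y⟫ := real_inner_comm _ _
  simpa [reApplyInnerSelf, h2] using pos_nonneg hQ (Ring.inverse Q y)

/-- Inverse norm comparison: adding a nonnegative operator decreases the inverse norm. -/
lemma inverse_norm_le {P S : Y →L[ℝ] Y} (hP : P.IsPositive) (hS : S.IsPositive)
    (hPU : IsUnit P) (hPSU : IsUnit (P + S)) :
    ‖Ring.inverse (P + S)‖ ≤ ‖Ring.inverse P‖ := by
  haveI : CompleteSpace Y := FiniteDimensional.complete ℝ Y
  set R := Ring.inverse (P + S) with hR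
  set R₀ := Ring.inverse P with hR₀
  refine opNorm_le_bound _ (norm_nonneg R₀) fun y => ?_
  set x := R y with hx
  have hPx : P (R₀ x) = x := (inverse_comp_cancel hPU x).1
  have hQx : (P + S) x = y := by
    rw [hx]; exact ((inverse_comp_cancel hPSU y).1)
  have h1 : ⟪P (R₀ x), x⟫ = ‖x‖ ^ 2 := by rw [hPx, real_inner_self_eq_norm_sq]
  have cs := pos_cs hP (R₀ x) x
  have h2 : ⟪P (R₀ x), R₀ x⟫ ≤ ‖R₀‖ * ‖x‖ ^ 2 := by
    rw [hPx]
    calc ⟪x, R₀ x⟫ ≤ ‖x‖ * ‖R₀ x‖ := real_inner_le_norm x (R₀ x)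
    _ ≤ ‖x‖ * (‖R₀‖ * ‖x‖) := by
        have := le_opNorm R₀ x
        exact mul_le_mul_of_nonneg_left this (norm_nonneg x)
    _ = ‖R₀‖ * ‖x‖ ^ 2 := by ring
  have h3 : ⟪P x, x⟫ ≤ ‖y‖ * ‖x‖ := by
    have hadd : ⟪P x, x⟫ ≤ ⟪(P + S) x, x⟫ := by
      have : ⟪(P + S) x, x⟫ = ⟪P x, x⟫ + ⟪S x, x⟫ := by
        simp [inner_add_left]
      rw [this]
      linarith [pos_nonneg hS x]
    calc ⟪P x, x⟫ ≤ ⟪(P + S) x, x⟫ := hadd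
    _ = ⟪y, x⟫ := by rw [hQx]
    _ ≤ ‖y‖ * ‖x‖ := real_inner_le_norm y x
  have h4 : 0 ≤ ⟪P x, x⟫ := pos_nonneg hP x
  have h5 : 0 ≤ ⟪P (R₀ x), R₀ x⟫ := pos_nonneg hP (R₀ x)
  have key : (‖x‖ ^ 2) ^ 2 ≤ (‖R₀‖ * ‖x‖ ^ 2) * (‖y‖ * ‖x‖) := by
    have hcs := cs
    rw [h1] at hcs
    exact le_trans hcs (mul_le_mul h2 h3 h4 (by positivity))
  by_cases hx0 : x = 0
  · rw [hx0]
    simp [mul_nonneg (norm_nonneg R₀) (norm_nonneg y)]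
  · have hxpos : 0 < ‖x‖ := norm_pos_iff.mpr hx0
    nlinarith [key, hxpos, pow_pos hxpos 3]

end FinDim

section Ops

variable {X Y : Type*}
    [NormedAddCommGroup X] [InnerProductSpace ℝ X] [CompleteSpace X]
    [NormedAddCommGroup Y] [InnerProductSpace ℝ Y] [FiniteDimensional ℝ Y]
    (A M : X →L[ℝ] Y) (C₀ : X →L[ℝ] X) (Γ : Y →L[ℝ] Y)

/-- abbreviation for the operator to invert -/
noncomputable def Qop (B : X →L[ℝ] X) (δ : ℝ) : Y →L[ℝ] Y :=
  Γ + δ ^ 2 • (M ∘L B ∘L adjoint M) + A ∘L C₀ ∘L adjoint A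

variable {A M C₀ Γ}

lemma S1_pos {B : X →L[ℝ] X} (hB : B.IsPositive) (δ : ℝ) :
    (δ ^ 2 • (M ∘L B ∘L adjoint M)).IsPositive :=
  smul_pos_of_nonneg (hB.conj_adjoint M) (sq_nonneg δ)

lemma S2_pos (hC₀ : C₀.IsPositive) : (A ∘L C₀ ∘L adjoint A).IsPositive :=
  hC₀.conj_adjoint A

lemma Qop_pos (hC₀ : C₀.IsPositive) (hΓ : Γ.IsPositive) {B : X →L[ℝ] X}
    (hB : B.IsPositive) (δ : ℝ) : (Qop A M C₀ Γ B δ).IsPositive :=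
  (hΓ.add (S1_pos hB δ)).add (S2_pos hC₀)

lemma Qop_strict (hC₀ : C₀.IsPositive) (hΓpos : ∀ y : Y, y ≠ 0 → 0 < ⟪Γ y, y⟫)
    {B : X →L[ℝ] X} (hB : B.IsPositive) (δ : ℝ) :
    ∀ y : Y, y ≠ 0 → 0 < ⟪Qop A M C₀ Γ B δ y, y⟫ := by
  intro y hy
  have h1 := pos_nonneg (S1_pos (M := M) hB δ) y
  have h2 := pos_nonneg (S2_pos (A := A) hC₀) y
  have h3 := hΓpos y hy
  have : ⟪Qop A M C₀ Γ B δ y, y⟫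
      = ⟪Γ y, y⟫ + ⟪(δ ^ 2 • (M ∘L B ∘L adjoint M)) y, y⟫ + ⟪(A ∘L C₀ ∘L adjoint A) y, y⟫ := by
    simp [Qop, inner_add_left]
  rw [this]
  linarith

lemma Qop_isUnit (hC₀ : C₀.IsPositive) (hΓpos : ∀ y : Y, y ≠ 0 → 0 < ⟪Γ y, y⟫)
    {B : X →L[ℝ] X} (hB : B.IsPositive) (δ : ℝ) : IsUnit (Qop A M C₀ Γ B δ) :=
  isUnit_of_strict _ (Qop_strict hC₀ hΓpos hB δ)

lemma P0_pos (hC₀ : C₀.IsPositive) (hΓ : Γ.IsPositive) :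
    (Γ + A ∘L C₀ ∘L adjoint A).IsPositive :=
  hΓ.add (S2_pos hC₀)

lemma P0_isUnit (hC₀ : C₀.IsPositive) (hΓpos : ∀ y : Y, y ≠ 0 → 0 < ⟪Γ y, y⟫) :
    IsUnit (Γ + A ∘L C₀ ∘L adjoint A) := by
  apply isUnit_of_strict
  intro y hy
  have h2 := pos_nonneg (S2_pos (A := A) hC₀) y
  have h3 := hΓpos y hy
  have : ⟪(Γ + A ∘L C₀ ∘L adjoint A) y, y⟫ = ⟪Γ y, y⟫ + ⟪(A ∘L C₀ ∘L adjoint A) y, y⟫ := by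
    simp [inner_add_left]
  rw [this]; linarith

lemma Kop_norm_le (hC₀ : C₀.IsPositive) (hΓ : Γ.IsPositive)
    (hΓpos : ∀ y : Y, y ≠ 0 → 0 < ⟪Γ y, y⟫) {B : X →L[ℝ] X} (hB : B.IsPositive) (δ : ℝ) :
    ‖Kop A M C₀ Γ B δ‖ ≤ ‖C₀‖ * ‖A‖ * ‖Ring.inverse (Γ + A ∘L C₀ ∘L adjoint A)‖ := by
  have hrw : Γ + δ ^ 2 • (M ∘L B ∘L adjoint M) + A ∘L C₀ ∘L adjoint A
      = (Γ + A ∘L C₀ ∘L adjoint A) + δ ^ 2 • (M ∘L B ∘L adjoint M) := by abel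
  have hQU : IsUnit ((Γ + A ∘L C₀ ∘L adjoint A) + δ ^ 2 • (M ∘L B ∘L adjoint M)) := by
    rw [← hrw]; exact Qop_isUnit hC₀ hΓpos hB δ
  have hnorm : ‖Ring.inverse (Γ + δ ^ 2 • (M ∘L B ∘L adjoint M) + A ∘L C₀ ∘L adjoint A)‖
      ≤ ‖Ring.inverse (Γ + A ∘L C₀ ∘L adjoint A)‖ := by
    rw [hrw]
    exact inverse_norm_le (P0_pos hC₀ hΓ) (S1_pos hB δ) (P0_isUnit hC₀ hΓpos) hQU
  calc ‖Kop A M C₀ Γ B δ‖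
      ≤ ‖C₀‖ * ‖(adjoint A) ∘L
          Ring.inverse (Γ + δ ^ 2 • (M ∘L B ∘L adjoint M) + A ∘L C₀ ∘L adjoint A)‖ :=
        opNorm_comp_le _ _
    _ ≤ ‖C₀‖ * (‖adjoint A‖ *
          ‖Ring.inverse (Γ + δ ^ 2 • (M ∘L B ∘L adjoint M) + A ∘L C₀ ∘L adjoint A)‖) := by
        exact mul_le_mul_of_nonneg_left (opNorm_comp_le _ _) (norm_nonneg _)
    _ ≤ ‖C₀‖ * (‖A‖ * ‖Ring.inverse (Γ + A ∘L C₀ ∘L adjoint A)‖) := by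
        rw [adjoint.norm_map]
        exact mul_le_mul_of_nonneg_left
          (mul_le_mul_of_nonneg_left hnorm (norm_nonneg _)) (norm_nonneg _)
    _ = ‖C₀‖ * ‖A‖ * ‖Ring.inverse (Γ + A ∘L C₀ ∘L adjoint A)‖ := by ring

lemma Fop_isPositive (hC₀ : C₀.IsPositive) (hΓ : Γ.IsPositive)
    (hΓpos : ∀ y : Y, y ≠ 0 → 0 < ⟪Γ y, y⟫) {B : X →L[ℝ] X} (hB : B.IsPositive) (δ : ℝ) :
    (Fop A M C₀ Γ B δ).IsPositive := by
  set Q := Qop A M C₀ Γ B δ with hQdef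
  have hQU : IsUnit Q := Qop_isUnit hC₀ hΓpos hB δ
  have hQpos : Q.IsPositive := Qop_pos hC₀ hΓ hB δ
  set R := Ring.inverse Q with hRdef
  have hRsa : IsSelfAdjoint R := inverse_selfAdjoint hQpos.isSelfAdjoint
  have hKeq : Kop A M C₀ Γ B δ = C₀ ∘L (adjoint A) ∘L R := rfl
  rw [isPositive_def']
  constructor
  · rw [isSelfAdjoint_iff']
    rw [Fop, hKeq, map_sub, hC₀.isSelfAdjoint.adjoint_eq]
    congr 1
    simp only [adjoint_comp, adjoint_adjoint, hC₀.isSelfAdjoint.adjoint_eq,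
      hRsa.adjoint_eq]
    ext v
    rfl
  · intro x
    set y := A (C₀ x) with hy
    set z := R y with hz
    have hQz : Q z = y := (inverse_comp_cancel hQU y).1
    set t : ℝ := ⟪z, y⟫ with ht
    have hFx : (Fop A M C₀ Γ B δ) x = C₀ x - C₀ (adjoint A (R (A (C₀ x)))) := rfl
    have hval : (Fop A M C₀ Γ B δ).reApplyInnerSelf x = ⟪C₀ x, x⟫ - t := by
      simp only [reApplyInnerSelf, hFx, inner_sub_left, RCLike.ofReal_real_eq_id]
      have : ⟪C₀ (adjoint A (R (A (C₀ x)))), x⟫ = t := by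
        rw [sym_inner hC₀, adjoint_inner_left]
      simp [this]
    rw [hval]
    have htnn : 0 ≤ t := by
      have : t = ⟪Q z, z⟫ := by
        rw [hQz, ht, real_inner_comm]
      rw [this]
      exact pos_nonneg hQpos z
    have hC₀nn : 0 ≤ ⟪C₀ x, x⟫ := pos_nonneg hC₀ x
    have hsq : t ^ 2 ≤ ⟪C₀ x, x⟫ * t := by
      have cs := pos_cs hC₀ x (adjoint A z)
      have e1 : ⟪C₀ x, adjoint A z⟫ = t := by
        rw [adjoint_inner_right, ht, real_inner_comm]
      have e2 : ⟪C₀ (adjoint A z), adjoint A z⟫ ≤ t := by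
        have e3 : ⟪C₀ (adjoint A z), adjoint A z⟫ = ⟪(A ∘L C₀ ∘L adjoint A) z, z⟫ := by
          rw [adjoint_inner_right]
          rfl
        have e4 : ⟪(A ∘L C₀ ∘L adjoint A) z, z⟫ ≤ ⟪Q z, z⟫ := by
          have : ⟪Q z, z⟫ = ⟪Γ z, z⟫ + ⟪(δ ^ 2 • (M ∘L B ∘L adjoint M)) z, z⟫
              + ⟪(A ∘L C₀ ∘L adjoint A) z, z⟫ := by
            simp [hQdef, Qop, inner_add_left]
          rw [this]
          linarith [pos_nonneg hΓ z, pos_nonneg (S1_pos (M := M) hB δ) z]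
        have e5 : ⟪Q z, z⟫ = t := by rw [hQz, ht, real_inner_comm]
        rw [e3]; linarith
      calc t ^ 2 = ⟪C₀ x, adjoint A z⟫ ^ 2 := by rw [e1]
      _ ≤ ⟪C₀ x, x⟫ * ⟪C₀ (adjoint A z), adjoint A z⟫ := cs
      _ ≤ ⟪C₀ x, x⟫ * t := mul_le_mul_of_nonneg_left e2 hC₀nn
    nlinarith [hsq, htnn, hC₀nn]

lemma covIter_isPositive (hC₀ : C₀.IsPositive) (hΓ : Γ.IsPositive)
    (hΓpos : ∀ y : Y, y ≠ 0 → 0 < ⟪Γ y, y⟫) (δ : ℝ) (n : ℕ) :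
    (covIter A M C₀ Γ δ n).IsPositive := by
  induction n with
  | zero => exact hC₀
  | succ n ih => exact Fop_isPositive hC₀ hΓ hΓpos ih δ

end Ops

/-- With `K_max = ‖C₀‖·‖A‖·‖(Γ + A C₀ A*)⁻¹‖`, `β = K_max·‖M‖`, `L = ‖m₀‖ + K_max·‖b − A m₀‖`
and `0 ≤ δ < 1/β`, the mean iterates satisfy `‖m_ℓ(δ)‖ ≤ (βδ)^ℓ ‖m₀‖ + L/(1 − βδ)` for all
`ℓ ≥ 0`; in particular they are uniformly bounded. -/
theorem stmt_6 {X Y : Type*}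
    [NormedAddCommGroup X] [InnerProductSpace ℝ X] [CompleteSpace X]
    [NormedAddCommGroup Y] [InnerProductSpace ℝ Y] [FiniteDimensional ℝ Y]
    (A M : X →L[ℝ] Y) (C₀ : X →L[ℝ] X) (Γ : Y →L[ℝ] Y)
    (m₀ : X) (b : Y)
    (hC₀ : C₀.IsPositive) (hΓ : Γ.IsPositive)
    (hΓpos : ∀ y : Y, y ≠ 0 → 0 < ⟪Γ y, y⟫)
    (Kmax β L : ℝ)
    (hK : Kmax = ‖C₀‖ * ‖A‖ * ‖Ring.inverse (Γ + A ∘L C₀ ∘L adjoint A)‖)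
    (hβ : β = Kmax * ‖M‖)
    (hL : L = ‖m₀‖ + Kmax * ‖b - A m₀‖)
    (δ : ℝ) (hδ0 : 0 ≤ δ) (hδ1 : β * δ < 1) :
    ∀ ℓ : ℕ, ‖meanIter A M C₀ Γ m₀ b δ ℓ‖ ≤ (β * δ) ^ ℓ * ‖m₀‖ + L / (1 - β * δ) := by
  have hKnn : 0 ≤ Kmax := by rw [hK]; positivity
  have hβnn : 0 ≤ β := by rw [hβ]; exact mul_nonneg hKnn (norm_nonneg _)
  have hβδ : 0 ≤ β * δ := mul_nonneg hβnn hδ0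
  have h1βδ : 0 < 1 - β * δ := by linarith
  have hLnn : 0 ≤ L := by rw [hL]; positivity
  have hLdiv : 0 ≤ L / (1 - β * δ) := div_nonneg hLnn h1βδ.le
  have hLle : L ≤ L / (1 - β * δ) := by
    rw [le_div_iff₀ h1βδ]
    nlinarith
  intro ℓ
  induction ℓ with
  | zero =>
    have : meanIter A M C₀ Γ m₀ b δ 0 = m₀ := rfl
    rw [this, pow_zero, one_mul]
    linarith
  | succ n ih =>
    have hKb := Kop_norm_le (A := A) (M := M)
      hC₀ hΓ hΓpos (covIter_isPositive (A := A) (M := M) hC₀ hΓ hΓpos δ n) δ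
    rw [← hK] at hKb
    set mn := meanIter A M C₀ Γ m₀ b δ n with hmn
    set v := b - A m₀ - δ • M mn with hv
    have hmeq : meanIter A M C₀ Γ m₀ b δ (n + 1)
        = m₀ + (Kop A M C₀ Γ (covIter A M C₀ Γ δ n) δ) v := rfl
    have hvle : ‖v‖ ≤ ‖b - A m₀‖ + δ * (‖M‖ * ‖mn‖) := by
      calc ‖v‖ ≤ ‖b - A m₀‖ + ‖δ • M mn‖ := norm_sub_le _ _
      _ = ‖b - A m₀‖ + δ * ‖M mn‖ := by rw [norm_smul, Real.norm_eq_abs, abs_of_nonneg hδ0]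
      _ ≤ ‖b - A m₀‖ + δ * (‖M‖ * ‖mn‖) :=
          add_le_add_right (mul_le_mul_of_nonneg_left (le_opNorm M mn) hδ0) _
    have hstep : ‖meanIter A M C₀ Γ m₀ b δ (n + 1)‖ ≤ L + β * δ * ‖mn‖ := by
      calc ‖meanIter A M C₀ Γ m₀ b δ (n + 1)‖
          ≤ ‖m₀‖ + ‖(Kop A M C₀ Γ (covIter A M C₀ Γ δ n) δ) v‖ := by
            rw [hmeq]; exact norm_add_le _ _
      _ ≤ ‖m₀‖ + Kmax * ‖v‖ := by
          have h1 := le_opNorm (Kop A M C₀ Γ (covIter A M C₀ Γ δ n) δ) v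
          have h2 := mul_le_mul_of_nonneg_right hKb (norm_nonneg v)
          linarith
      _ ≤ ‖m₀‖ + Kmax * (‖b - A m₀‖ + δ * (‖M‖ * ‖mn‖)) := by
          nlinarith [mul_le_mul_of_nonneg_left hvle hKnn]
      _ = L + β * δ * ‖mn‖ := by rw [hL, hβ]; ring
    have hih : β * δ * ‖mn‖ ≤ β * δ * ((β * δ) ^ n * ‖m₀‖ + L / (1 - β * δ)) :=
      mul_le_mul_of_nonneg_left ih hβδ
    have hfin : L + β * δ * ((β * δ) ^ n * ‖m₀‖ + L / (1 - β * δ))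
        = (β * δ) ^ (n + 1) * ‖m₀‖ + L / (1 - β * δ) := by
      have hne : 1 - β * δ ≠ 0 := ne_of_gt h1βδ
      field_simp
      ring
    calc ‖meanIter A M C₀ Γ m₀ b δ (n + 1)‖ ≤ L + β * δ * ‖mn‖ := hstep
    _ ≤ L + β * δ * ((β * δ) ^ n * ‖m₀‖ + L / (1 - β * δ)) := by linarith
    _ = (β * δ) ^ (n + 1) * ‖m₀‖ + L / (1 - β * δ) := hfin
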